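/- The 2×2 symmetric matrix D = (4√3/3) · [[a·6561√3/800 − b·(59049+44800π²)/7200, −a·6561/800 − b·6561√3/800], [−a·6561/800 − b·6561√3/800, −a·6561√3/800 + b·(59049−44800π²)/7200]], where a² + b² = 1, has eigenvalues (4√3/3)·(−59049 − 22400bπ²)/3600 and (4√3/3)·(59049 − 22400bπ²)/3600. -/
import Mathlib

open Real

/-- `μ` is an eigenvalue of the real 2×2 matrix `M`. -/
def HasEigenvalue2 (M : Matrix (Fin 2) (Fin 2) ℝ) (μ : ℝ) : Prop :=
  ∃ v : Fin 2 → ℝ, v ≠ 0 ∧ M.mulVec v = μ • v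

private lemma aux_eig (a b : ℝ) (hab : a ^ 2 + b ^ 2 = 1) (ε μ : ℝ)
    (hε : ε = 1 ∨ ε = -1)
    (hμ : μ = (4 * Real.sqrt 3 / 3) * (ε * 59049 - 22400 * b * π ^ 2) / 3600) :
    HasEigenvalue2
      ((4 * Real.sqrt 3 / 3) •
        !![a * (6561 * Real.sqrt 3 / 800) - b * ((59049 + 44800 * π ^ 2) / 7200),
            -a * (6561 / 800) - b * (6561 * Real.sqrt 3 / 800);
          -a * (6561 / 800) - b * (6561 * Real.sqrt 3 / 800),
            -a * (6561 * Real.sqrt 3 / 800) + b * ((59049 - 44800 * π ^ 2) / 7200)]) μ := by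
  set s : ℝ := Real.sqrt 3 with hs_def
  have hs : s ^ 2 = 3 := Real.sq_sqrt (by norm_num)
  set c : ℝ := 4 * s / 3 with hc_def
  set p : ℝ := s * a - b with hp_def
  set q : ℝ := -a - s * b with hq_def
  set l : ℝ := 2 * ε with hl_def
  have hε2 : ε ^ 2 = 1 := by rcases hε with h | h <;> rw [h] <;> norm_num
  have hpq : p ^ 2 + q ^ 2 = l ^ 2 := by
    rw [hp_def, hq_def, hl_def]
    linear_combination (a ^ 2 + b ^ 2) * hs + 4 * hab - 4 * hε2
  set k : ℝ := 6561 / 800 with hk_def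
  set d : ℝ := c * (-44800 * b * π ^ 2 / 7200) with hd_def
  have hM : ((4 * Real.sqrt 3 / 3) •
        !![a * (6561 * Real.sqrt 3 / 800) - b * ((59049 + 44800 * π ^ 2) / 7200),
            -a * (6561 / 800) - b * (6561 * Real.sqrt 3 / 800);
          -a * (6561 / 800) - b * (6561 * Real.sqrt 3 / 800),
            -a * (6561 * Real.sqrt 3 / 800) + b * ((59049 - 44800 * π ^ 2) / 7200)])
      = (c * k) • !![p, q; q, -p] + d • (1 : Matrix (Fin 2) (Fin 2) ℝ) := by
    ext i j
    fin_cases i <;> fin_cases j <;>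
      simp [Matrix.one_apply, hc_def, hp_def, hq_def, hk_def, hd_def] <;> ring
  have hμ' : μ = c * k * l + d := by
    rw [hμ, hc_def, hk_def, hd_def, hl_def]; ring
  have key : ∀ v : Fin 2 → ℝ, (!![p, q; q, -p]).mulVec v = l • v →
      ((4 * Real.sqrt 3 / 3) •
        !![a * (6561 * Real.sqrt 3 / 800) - b * ((59049 + 44800 * π ^ 2) / 7200),
            -a * (6561 / 800) - b * (6561 * Real.sqrt 3 / 800);
          -a * (6561 / 800) - b * (6561 * Real.sqrt 3 / 800),
            -a * (6561 * Real.sqrt 3 / 800) + b * ((59049 - 44800 * π ^ 2) / 7200)]).mulVec v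
      = μ • v := by
    intro v hv
    rw [hM, Matrix.add_mulVec, Matrix.smul_mulVec, Matrix.smul_mulVec, hv,
      Matrix.one_mulVec, hμ']
    module
  have hl0 : l ≠ 0 := by
    rw [hl_def]; rcases hε with h | h <;> rw [h] <;> norm_num
  by_cases hz : q = 0 ∧ l - p = 0
  · refine ⟨![l + p, q], ?_, key _ ?_⟩
    · intro h0
      have h1 : l + p ≠ 0 := by
        have : p = l := by linarith [hz.2]
        rw [this]
        intro h; exact hl0 (by linarith)
      exact h1 (by simpa using congrFun h0 0)
    · funext i
      fin_cases i <;>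
        simp [Matrix.mulVec, dotProduct, Fin.sum_univ_two]
      · linear_combination hpq
      · ring
  · refine ⟨![q, l - p], ?_, key _ ?_⟩
    · intro h0
      exact hz ⟨by simpa using congrFun h0 0, by simpa using congrFun h0 1⟩
    · funext i
      fin_cases i <;>
        simp [Matrix.mulVec, dotProduct, Fin.sum_univ_two]
      · ring
      · linear_combination hpq

theorem perturbation_matrix_eigenvalues (a b : ℝ) (hab : a ^ 2 + b ^ 2 = 1) :
    HasEigenvalue2
      ((4 * Real.sqrt 3 / 3) •
        !![a * (6561 * Real.sqrt 3 / 800) - b * ((59049 + 44800 * π ^ 2) / 7200),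
            -a * (6561 / 800) - b * (6561 * Real.sqrt 3 / 800);
          -a * (6561 / 800) - b * (6561 * Real.sqrt 3 / 800),
            -a * (6561 * Real.sqrt 3 / 800) + b * ((59049 - 44800 * π ^ 2) / 7200)])
      ((4 * Real.sqrt 3 / 3) * (-59049 - 22400 * b * π ^ 2) / 3600) ∧
    HasEigenvalue2
      ((4 * Real.sqrt 3 / 3) •
        !![a * (6561 * Real.sqrt 3 / 800) - b * ((59049 + 44800 * π ^ 2) / 7200),
            -a * (6561 / 800) - b * (6561 * Real.sqrt 3 / 800);
          -a * (6561 / 800) - b * (6561 * Real.sqrt 3 / 800),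
            -a * (6561 * Real.sqrt 3 / 800) + b * ((59049 - 44800 * π ^ 2) / 7200)])
      ((4 * Real.sqrt 3 / 3) * (59049 - 22400 * b * π ^ 2) / 3600) := by
  constructor
  · exact aux_eig a b hab (-1) _ (Or.inr rfl) (by ring)
  · exact aux_eig a b hab 1 _ (Or.inl rfl) (by ring)
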